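/- Let 𝓛₀₁ be the set of all Borel probability measures on ℝ with mean 0 and variance 1, let α∈(0,1), and let μ₀∈𝓛₀₁. Then the relative measure of model risk for ES_α at μ₀ over 𝓛₀₁ satisfies RM(μ₀,𝓛₀₁) = (√((1-α)/α) − ES_α(μ₀)) / √((1-α)/α) = 1 − √(α/(1-α))·ES_α(μ₀). -/

import Mathlib

open MeasureTheory Set

/-- The set of all Borel probability measures on ℝ with mean 0 and variance 1. -/
def stdMeasures : Set (Measure ℝ) :=
  {μ | IsProbabilityMeasure μ ∧ (∫ x, x ∂μ) = 0 ∧ (∫ x, x ^ 2 ∂μ) = 1}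

/-- The distribution function of a measure: `F_μ(x) = μ((-∞, x])`. -/
noncomputable def distFun (μ : Measure ℝ) (x : ℝ) : ℝ := (μ (Iic x)).toReal

/-- The lower quantile of order `α`: `q_α(μ) = inf {x : F_μ(x) ≥ α}`. -/
noncomputable def lowerQuantile (μ : Measure ℝ) (α : ℝ) : ℝ :=
  sInf {x : ℝ | α ≤ distFun μ x}

/-- The Value-at-Risk of order `α`: `VaR_α(μ) = -q_α(μ)`. -/
noncomputable def VaR (μ : Measure ℝ) (α : ℝ) : ℝ := - lowerQuantile μ α

/-- The Expected Shortfall of order `α`: `ES_α(μ) = (1/α) ∫₀^α VaR_u(μ) du`. -/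
noncomputable def ES (μ : Measure ℝ) (α : ℝ) : ℝ :=
  (1 / α) * ∫ u in (0 : ℝ)..α, VaR μ u


open Filter ProbabilityTheory Topology ENNReal

namespace RMaux

variable {μ : Measure ℝ} [IsProbabilityMeasure μ] {u v x : ℝ}

lemma distFun_eq_cdf : distFun μ = cdf μ := by
  funext x; exact (cdf_eq_real μ x).symm

lemma qSet_eq : {x : ℝ | u ≤ distFun μ x} = {x | u ≤ cdf μ x} := by
  rw [distFun_eq_cdf]

lemma qSet_nonempty (hu : u < 1) : {x : ℝ | u ≤ distFun μ x}.Nonempty := by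
  rw [qSet_eq]
  obtain ⟨x, hx⟩ := (Filter.Tendsto.eventually_const_le hu (tendsto_cdf_atTop μ)).exists
  exact ⟨x, hx⟩

lemma qSet_bddBelow (hu : 0 < u) : BddBelow {x : ℝ | u ≤ distFun μ x} := by
  rw [qSet_eq]
  obtain ⟨x₀, hx₀⟩ := (Filter.Tendsto.eventually_lt_const hu (tendsto_cdf_atBot μ)).exists
  refine ⟨x₀, fun y hy => ?_⟩
  by_contra h
  push_neg at h
  exact absurd (le_trans hy (monotone_cdf μ h.le)) (not_le.mpr hx₀)

lemma lowerQuantile_mem (hu : 0 < u) (hu1 : u < 1) :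
    lowerQuantile μ u ∈ {x : ℝ | u ≤ distFun μ x} := by
  rw [qSet_eq]
  have hne := qSet_nonempty (μ := μ) hu1
  have hbdd := qSet_bddBelow (μ := μ) hu
  have key : ∀ x ∈ Ioi (lowerQuantile μ u), u ≤ cdf μ x := by
    intro x hx
    obtain ⟨s, hs, hsx⟩ := exists_lt_of_csInf_lt hne hx
    rw [qSet_eq] at hs
    exact le_trans hs (monotone_cdf μ hsx.le)
  have hrc := (cdf μ).right_continuous (lowerQuantile μ u)
  have : Tendsto (cdf μ) (𝓝[>] (lowerQuantile μ u)) (𝓝 (cdf μ (lowerQuantile μ u))) :=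
    hrc.mono_left (nhdsWithin_mono _ Ioi_subset_Ici_self)
  exact ge_of_tendsto this (eventually_nhdsWithin_of_forall key)

lemma lowerQuantile_le_iff (hu : 0 < u) (hu1 : u < 1) :
    lowerQuantile μ u ≤ x ↔ u ≤ distFun μ x := by
  constructor
  · intro h
    have hm := lowerQuantile_mem (μ := μ) hu hu1
    rw [qSet_eq] at hm
    show x ∈ {x : ℝ | u ≤ distFun μ x}
    rw [qSet_eq]
    exact le_trans hm (monotone_cdf μ h)
  · intro h
    exact csInf_le (qSet_bddBelow hu) h

lemma lowerQuantile_mono (hu : 0 < u) (hv : v < 1) (huv : u ≤ v) :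
    lowerQuantile μ u ≤ lowerQuantile μ v :=
  csInf_le_csInf (qSet_bddBelow hu) (qSet_nonempty hv)
    (fun x hx => le_trans huv hx)

end RMaux

namespace RMaux

variable {μ : Measure ℝ} [IsProbabilityMeasure μ] {u v x : ℝ}

variable (μ) in
noncomputable def Q : ℝ → ℝ := fun u => if 0 < u ∧ u < 1 then lowerQuantile μ u else 0

lemma Q_eq_on (hu : u ∈ Ioo (0:ℝ) 1) : Q μ u = lowerQuantile μ u := by
  simp [Q, hu.1, hu.2]

lemma preimage_Q_Iic :
    Q μ ⁻¹' Iic x ∩ Ioo 0 1 = Ioo 0 1 ∩ Iic (distFun μ x) := by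
  ext u
  simp only [mem_inter_iff, mem_preimage, mem_Iic, mem_Ioo, and_comm]
  constructor
  · rintro ⟨⟨h0, h1⟩, hQ⟩
    rw [Q_eq_on ⟨h0, h1⟩] at hQ
    exact ⟨(lowerQuantile_le_iff h0 h1).mp hQ, h0, h1⟩
  · rintro ⟨hF, h0, h1⟩
    rw [Q_eq_on ⟨h0, h1⟩]
    exact ⟨⟨h0, h1⟩, (lowerQuantile_le_iff h0 h1).mpr hF⟩

lemma measurable_Q : Measurable (Q μ) := by
  apply measurable_of_Iic
  intro x
  have : Q μ ⁻¹' Iic x =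
      (Ioo 0 1 ∩ Iic (distFun μ x)) ∪ ((Ioo (0:ℝ) 1)ᶜ ∩ Q μ ⁻¹' Iic x) := by
    rw [← preimage_Q_Iic]
    ext u
    by_cases h : u ∈ Ioo (0:ℝ) 1 <;> simp [h]
  rw [this]
  have h2 : (Ioo (0:ℝ) 1)ᶜ ∩ Q μ ⁻¹' Iic x =
      if (0:ℝ) ≤ x then (Ioo (0:ℝ) 1)ᶜ else ∅ := by
    ext u
    by_cases h : u ∈ Ioo (0:ℝ) 1
    · simp [h]
    · have : Q μ u = 0 := by
        simp only [Q, mem_Ioo] at h ⊢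
        rw [if_neg h]
      by_cases hx : (0:ℝ) ≤ x <;> simp [h, hx, this, mem_preimage]
  rw [h2]
  split <;>
    exact (measurableSet_Ioo.inter measurableSet_Iic).union (by measurability)

lemma volume_Ioo_prob : IsProbabilityMeasure (volume.restrict (Ioo (0:ℝ) 1)) :=
  ⟨by simp⟩

lemma map_Q : Measure.map (Q μ) (volume.restrict (Ioo 0 1)) = μ := by
  haveI := volume_Ioo_prob
  haveI : IsProbabilityMeasure (Measure.map (Q μ) (volume.restrict (Ioo 0 1))) :=
    MeasureTheory.Measure.isProbabilityMeasure_map measurable_Q.aemeasurable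
  refine Measure.ext_of_Iic _ _ (fun x => ?_)
  rw [Measure.map_apply measurable_Q measurableSet_Iic,
    Measure.restrict_apply (measurable_Q measurableSet_Iic), preimage_Q_Iic]
  have hF0 : 0 ≤ distFun μ x := ENNReal.toReal_nonneg
  have hF1 : distFun μ x ≤ 1 := by
    rw [distFun_eq_cdf]; exact cdf_le_one μ x
  rcases lt_or_eq_of_le hF1 with h | h
  · have : Ioo (0:ℝ) 1 ∩ Iic (distFun μ x) = Ioc 0 (distFun μ x) := by
      ext u
      simp only [mem_inter_iff, mem_Ioo, mem_Iic, mem_Ioc]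
      exact ⟨fun ⟨⟨a, _⟩, c⟩ => ⟨a, c⟩, fun ⟨a, c⟩ => ⟨⟨a, lt_of_le_of_lt c h⟩, c⟩⟩
    rw [this, Real.volume_Ioc, sub_zero, distFun, ENNReal.ofReal_toReal (measure_ne_top μ _)]
  · have : Ioo (0:ℝ) 1 ∩ Iic (distFun μ x) = Ioo 0 1 := by
      rw [← h]
      ext u
      simp only [mem_inter_iff, mem_Ioo, mem_Iic]
      exact ⟨fun ⟨a, _⟩ => a, fun ⟨a, b⟩ => ⟨⟨a, b⟩, b.le⟩⟩
    rw [this, Real.volume_Ioo, sub_zero, ENNReal.ofReal_one]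
    have : distFun μ x = 1 := h.symm ▸ rfl
    rw [distFun] at this
    rw [← ENNReal.ofReal_toReal (measure_ne_top μ (Iic x)), this, ENNReal.ofReal_one]

lemma integral_comp_Q (f : ℝ → ℝ) (hf : AEStronglyMeasurable f μ) :
    ∫ u in Ioo (0:ℝ) 1, f (Q μ u) = ∫ x, f x ∂μ := by
  have hf' : AEStronglyMeasurable f (Measure.map (Q μ) (volume.restrict (Ioo 0 1))) := by
    rw [map_Q]; exact hf
  have h := integral_map (φ := Q μ) measurable_Q.aemeasurable hf'
  rw [map_Q] at h
  exact h.symm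

lemma integrable_comp_Q (f : ℝ → ℝ) (hf : AEStronglyMeasurable f μ)
    (hi : Integrable f μ) :
    Integrable (fun u => f (Q μ u)) (volume.restrict (Ioo (0:ℝ) 1)) := by
  have hf' : AEStronglyMeasurable f (Measure.map (Q μ) (volume.restrict (Ioo 0 1))) := by
    rw [map_Q]; exact hf
  have h := (integrable_map_measure hf' measurable_Q.aemeasurable)
  rw [map_Q] at h
  exact h.mp hi

end RMaux

namespace RMaux

variable {μ : Measure ℝ} {α : ℝ}

lemma std_prob (hμ : μ ∈ stdMeasures) : IsProbabilityMeasure μ := hμ.1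

lemma std_integrable_sq (hμ : μ ∈ stdMeasures) : Integrable (fun x => x ^ 2) μ := by
  by_contra h
  have h2 := hμ.2.2
  rw [integral_undef h] at h2
  exact one_ne_zero h2.symm

lemma std_integrable_id (hμ : μ ∈ stdMeasures) : Integrable (fun x : ℝ => x) μ := by
  haveI := hμ.1
  have hm : Integrable (fun x : ℝ => (x ^ 2 + 1) / 2) μ :=
    ((std_integrable_sq hμ).add (integrable_const 1)).div_const 2
  refine hm.mono (measurable_id.aestronglyMeasurable) (ae_of_all _ fun x => ?_)
  simp only [Real.norm_eq_abs, id]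
  rw [abs_of_nonneg (show (0:ℝ) ≤ (x ^ 2 + 1) / 2 by positivity)]
  nlinarith [sq_abs x, sq_nonneg (|x| - 1), abs_nonneg x]

section WithProb

variable [IsProbabilityMeasure μ]

lemma integrable_Q (hμ : μ ∈ stdMeasures) :
    Integrable (Q μ) (volume.restrict (Ioo (0:ℝ) 1)) :=
  integrable_comp_Q (fun x => x) measurable_id.aestronglyMeasurable (std_integrable_id hμ)

lemma integral_Q_eq_zero (hμ : μ ∈ stdMeasures) :
    ∫ u in Ioo (0:ℝ) 1, Q μ u = 0 := by
  rw [integral_comp_Q (fun x => x) measurable_id.aestronglyMeasurable]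
  exact hμ.2.1

lemma Ioc_union_Ioo (hα : α ∈ Ioo (0:ℝ) 1) :
    Ioc (0:ℝ) α ∪ Ioo α 1 = Ioo 0 1 := by
  ext u
  simp only [mem_union, mem_Ioc, mem_Ioo]
  constructor
  · rintro (⟨h1, h2⟩ | ⟨h1, h2⟩)
    · exact ⟨h1, lt_of_le_of_lt h2 hα.2⟩
    · exact ⟨lt_trans hα.1 h1, h2⟩
  · rintro ⟨h1, h2⟩
    rcases le_or_gt u α with h | h
    · exact Or.inl ⟨h1, h⟩
    · exact Or.inr ⟨h, h2⟩

lemma setIntegral_Q_nonpos (hα : α ∈ Ioo (0:ℝ) 1) (hμ : μ ∈ stdMeasures) :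
    ∫ u in Ioc (0:ℝ) α, Q μ u ≤ 0 := by
  have hsub1 : Ioc (0:ℝ) α ⊆ Ioo 0 1 := fun u hu => ⟨hu.1, lt_of_le_of_lt hu.2 hα.2⟩
  have hsub2 : Ioo α 1 ⊆ Ioo (0:ℝ) 1 := fun u hu => ⟨lt_trans hα.1 hu.1, hu.2⟩
  have hio : IntegrableOn (Q μ) (Ioo 0 1) volume := integrable_Q hμ
  have hi1 : IntegrableOn (Q μ) (Ioc 0 α) volume := hio.mono_set hsub1
  have hi2 : IntegrableOn (Q μ) (Ioo α 1) volume := hio.mono_set hsub2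
  set qα := lowerQuantile μ α with hqα
  have hA : ∫ u in Ioc (0:ℝ) α, Q μ u ≤ α * qα := by
    have hc : IntegrableOn (fun _ : ℝ => qα) (Ioc 0 α) volume :=
      integrableOn_const (by simp)
    have h := setIntegral_mono_on hi1 hc measurableSet_Ioc (fun u hu => by
      rw [Q_eq_on ⟨hu.1, lt_of_le_of_lt hu.2 hα.2⟩]
      exact lowerQuantile_mono hu.1 hα.2 hu.2)
    rwa [setIntegral_const, Real.volume_real_Ioc_of_le hα.1.le, sub_zero,
      smul_eq_mul] at h
  have hB : (1 - α) * qα ≤ ∫ u in Ioo α (1:ℝ), Q μ u := by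
    have hc : IntegrableOn (fun _ : ℝ => qα) (Ioo α 1) volume :=
      integrableOn_const (by simp)
    have h := setIntegral_mono_on hc hi2 measurableSet_Ioo (fun u hu => by
      rw [Q_eq_on ⟨lt_trans hα.1 hu.1, hu.2⟩]
      exact lowerQuantile_mono hα.1 hu.2 hu.1.le)
    rwa [setIntegral_const, Real.volume_real_Ioo_of_le hα.2.le,
      smul_eq_mul] at h
  have hsum : (∫ u in Ioc (0:ℝ) α, Q μ u) + ∫ u in Ioo α (1:ℝ), Q μ u = 0 := by
    have hd : Disjoint (Ioc (0:ℝ) α) (Ioo α 1) :=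
      disjoint_left.mpr (fun u h1 h2 => absurd h1.2 (not_le.mpr h2.1))
    rw [← setIntegral_union hd measurableSet_Ioo hi1 hi2, Ioc_union_Ioo hα]
    exact integral_Q_eq_zero hμ
  nlinarith [hα.1, hα.2]

end WithProb

end RMaux

namespace RMaux

variable {μ : Measure ℝ} {α : ℝ} [IsProbabilityMeasure μ]

lemma intervalIntegral_VaR (hα : α ∈ Ioo (0:ℝ) 1) :
    ∫ u in (0:ℝ)..α, VaR μ u = - ∫ u in Ioc (0:ℝ) α, Q μ u := by
  rw [intervalIntegral.integral_of_le hα.1.le, ← integral_neg]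
  refine setIntegral_congr_fun measurableSet_Ioc (fun u hu => ?_)
  rw [VaR, Q_eq_on ⟨hu.1, lt_of_le_of_lt hu.2 hα.2⟩]

lemma ES_nonneg (hα : α ∈ Ioo (0:ℝ) 1) (hμ : μ ∈ stdMeasures) : 0 ≤ ES μ α := by
  rw [ES, intervalIntegral_VaR hα]
  have h := setIntegral_Q_nonpos hα hμ
  have h0 : 0 < 1 / α := by
    rw [one_div]; exact inv_pos.mpr hα.1
  nlinarith

lemma ES_le_sqrt (hα : α ∈ Ioo (0:ℝ) 1) (hμ : μ ∈ stdMeasures) :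
    ES μ α ≤ Real.sqrt ((1 - α) / α) := by
  obtain ⟨h0, h1⟩ := hα
  set r := Real.sqrt (α * (1 - α)) with hr
  have hr0 : 0 < r := Real.sqrt_pos.mpr (by nlinarith)
  have hr2 : r ^ 2 = α * (1 - α) := Real.sq_sqrt (by nlinarith)
  set s : ℝ := 1 / (2 * r) with hs
  have hs0 : 0 < s := by positivity
  set t : ℝ := s * (1 - 2 * α) with ht
  set g : ℝ → ℝ := fun x => max (-x - t) 0 with hg
  have hgm : Measurable g := (measurable_id.neg.sub measurable_const).max measurable_const
  have hgi : Integrable g μ := by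
    refine ((std_integrable_id hμ).neg.sub (integrable_const t)).mono
      hgm.aestronglyMeasurable (ae_of_all _ fun x => ?_)
    simp only [Real.norm_eq_abs, hg]
    rw [abs_of_nonneg (le_max_right _ _)]
    exact max_le (le_abs_self _) (abs_nonneg _)
  have hsub : Ioc (0:ℝ) α ⊆ Ioo 0 1 := fun u hu => ⟨hu.1, lt_of_le_of_lt hu.2 h1⟩
  have hQio : IntegrableOn (Q μ) (Ioo 0 1) volume := integrable_Q hμ
  have hQ1 : IntegrableOn (Q μ) (Ioc 0 α) volume := hQio.mono_set hsub
  have hgQ : IntegrableOn (fun u => g (Q μ u)) (Ioo (0:ℝ) 1) volume :=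
    integrable_comp_Q g hgm.aestronglyMeasurable hgi
  have hgQ1 : IntegrableOn (fun u => g (Q μ u)) (Ioc (0:ℝ) α) volume := hgQ.mono_set hsub
  have hct : IntegrableOn (fun _ : ℝ => t) (Ioc 0 α) volume :=
    integrableOn_const (by simp)
  have step1 : ∫ u in Ioc (0:ℝ) α, (- Q μ u) ≤ ∫ u in Ioc (0:ℝ) α, (t + g (Q μ u)) := by
    refine setIntegral_mono_on hQ1.neg (hct.add hgQ1)
      measurableSet_Ioc (fun u _ => ?_)
    have := le_max_left (- Q μ u - t) 0
    simp only [hg]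
    linarith
  have step2 : ∫ u in Ioc (0:ℝ) α, (t + g (Q μ u)) =
      α * t + ∫ u in Ioc (0:ℝ) α, g (Q μ u) := by
    rw [integral_add hct hgQ1, setIntegral_const,
      Real.volume_real_Ioc_of_le h0.le, sub_zero, smul_eq_mul]
  have step3 : ∫ u in Ioc (0:ℝ) α, g (Q μ u) ≤ ∫ u in Ioo (0:ℝ) 1, g (Q μ u) := by
    refine setIntegral_mono_set hgQ (ae_of_all _ fun u => le_max_right _ _)
      (HasSubset.Subset.eventuallyLE hsub)
  have step4 : ∫ u in Ioo (0:ℝ) 1, g (Q μ u) = ∫ x, g x ∂μ :=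
    integral_comp_Q g hgm.aestronglyMeasurable
  have hdecomp : (fun x : ℝ => (s - t - x) ^ 2 / (4 * s)) =
      fun x => x ^ 2 * (1 / (4 * s)) + x * (-(2 * (s - t)) / (4 * s)) +
        (s - t) ^ 2 / (4 * s) := by
    funext x
    field_simp
    ring
  have hq2i : Integrable (fun x => (s - t - x) ^ 2 / (4 * s)) μ := by
    rw [hdecomp]
    exact (((std_integrable_sq hμ).mul_const _).add
      ((std_integrable_id hμ).mul_const _)).add (integrable_const _)
  have step5 : ∫ x, g x ∂μ ≤ ∫ x, (s - t - x) ^ 2 / (4 * s) ∂μ := by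
    refine integral_mono hgi hq2i (fun x => ?_)
    have h4s : (0:ℝ) < 4 * s := by linarith
    simp only [hg]
    apply max_le
    · rw [le_div_iff₀ h4s]
      nlinarith [sq_nonneg (-x - t - s)]
    · positivity
  have i1 : Integrable (fun x : ℝ => x ^ 2 * (1 / (4 * s))) μ :=
    (std_integrable_sq hμ).mul_const _
  have i2 : Integrable (fun x : ℝ => x * (-(2 * (s - t)) / (4 * s))) μ :=
    (std_integrable_id hμ).mul_const _
  have i12 : Integrable (fun x : ℝ =>
      x ^ 2 * (1 / (4 * s)) + x * (-(2 * (s - t)) / (4 * s))) μ := i1.add i2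
  have step6 : ∫ x, (s - t - x) ^ 2 / (4 * s) ∂μ = (1 + (s - t) ^ 2) / (4 * s) := by
    rw [hdecomp, integral_add i12 (integrable_const _), integral_add i1 i2,
      integral_mul_const, integral_mul_const, hμ.2.1, hμ.2.2, integral_const]
    simp only [measureReal_def, measure_univ, ENNReal.toReal_one, one_smul, zero_mul, add_zero, one_mul]
    ring
  have hst : s - t = α / r := by
    rw [ht, hs]
    field_simp
    ring
  have halg : α * t + (1 + (s - t) ^ 2) / (4 * s) = r := by
    rw [hst, ht, hs]
    field_simp
    ring_nf
    nlinarith [hr2]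
  have hK : α * Real.sqrt ((1 - α) / α) = r := by
    rw [hr, show α * (1 - α) = α ^ 2 * ((1 - α) / α) by field_simp,
      Real.sqrt_mul (sq_nonneg α), Real.sqrt_sq h0.le]
  have hfinal : ∫ u in (0:ℝ)..α, VaR μ u ≤ α * Real.sqrt ((1 - α) / α) := by
    rw [intervalIntegral_VaR ⟨h0, h1⟩, hK, ← halg, ← integral_neg]
    calc ∫ u in Ioc (0:ℝ) α, (- Q μ u) ≤ α * t + ∫ u in Ioc (0:ℝ) α, g (Q μ u) :=
          step2 ▸ step1
      _ ≤ α * t + ∫ x, (s - t - x) ^ 2 / (4 * s) ∂μ := by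
          have := le_trans step3 (le_of_eq step4)
          linarith [le_trans this step5]
      _ = α * t + (1 + (s - t) ^ 2) / (4 * s) := by rw [step6]
  rw [ES]
  rw [div_mul_eq_mul_div, one_mul, div_le_iff₀ h0]
  calc ∫ u in (0:ℝ)..α, VaR μ u ≤ α * Real.sqrt ((1 - α) / α) := hfinal
    _ = Real.sqrt ((1 - α) / α) * α := mul_comm _ _

end RMaux

namespace RMaux

open ENNReal

noncomputable def tp (p1 p2 a b c : ℝ) : Measure ℝ :=
  ENNReal.ofReal p1 • Measure.dirac a + ENNReal.ofReal p2 • Measure.dirac b +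
    ENNReal.ofReal (1 - p1 - p2) • Measure.dirac c

variable {p1 p2 a b c : ℝ}

lemma integrable_smul_dirac (f : ℝ → ℝ) (hf : Measurable f) (r : ℝ) (x : ℝ) :
    Integrable f (ENNReal.ofReal r • Measure.dirac x) := by
  refine ⟨hf.aestronglyMeasurable, ?_⟩
  rw [HasFiniteIntegral, lintegral_smul_measure, lintegral_dirac' x hf.enorm]
  exact ENNReal.mul_lt_top ENNReal.ofReal_lt_top (by simp)

lemma integral_smul_dirac (f : ℝ → ℝ) (hr : 0 ≤ r) (x : ℝ) :
    ∫ y, f y ∂(ENNReal.ofReal r • Measure.dirac x) = r * f x := by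
  rw [integral_smul_measure, integral_dirac, ENNReal.toReal_ofReal hr, smul_eq_mul]

lemma tp_integral (hp1 : 0 ≤ p1) (hp2 : 0 ≤ p2) (hp3 : 0 ≤ 1 - p1 - p2)
    (f : ℝ → ℝ) (hf : Measurable f) :
    ∫ x, f x ∂(tp p1 p2 a b c) = p1 * f a + p2 * f b + (1 - p1 - p2) * f c := by
  rw [tp, integral_add_measure (((integrable_smul_dirac f hf p1 a).add_measure
      (integrable_smul_dirac f hf p2 b))) (integrable_smul_dirac f hf _ c),
    integral_add_measure (integrable_smul_dirac f hf p1 a) (integrable_smul_dirac f hf p2 b),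
    integral_smul_dirac f hp1, integral_smul_dirac f hp2, integral_smul_dirac f hp3]

lemma tp_prob (hp1 : 0 ≤ p1) (hp2 : 0 ≤ p2) (hp3 : 0 ≤ 1 - p1 - p2) :
    IsProbabilityMeasure (tp p1 p2 a b c) := by
  constructor
  simp only [tp, Measure.add_apply, Measure.smul_apply, smul_eq_mul,
    Measure.dirac_apply_of_mem (mem_univ _), mul_one]
  rw [← ENNReal.ofReal_add hp1 hp2, ← ENNReal.ofReal_add (by linarith) hp3]
  norm_num

lemma tp_Iic (hp1 : 0 ≤ p1) (hp2 : 0 ≤ p2) (hp3 : 0 ≤ 1 - p1 - p2) (x : ℝ) :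
    tp p1 p2 a b c (Iic x) = ENNReal.ofReal
      ((if a ≤ x then p1 else 0) + (if b ≤ x then p2 else 0) +
        (if c ≤ x then 1 - p1 - p2 else 0)) := by
  have hite : ∀ (P : Prop) [Decidable P] (r : ℝ),
      (if P then ENNReal.ofReal r else 0) = ENNReal.ofReal (if P then r else 0) := by
    intro P _ r
    split <;> simp
  have hA : (0:ℝ) ≤ if a ≤ x then p1 else 0 := by split <;> simp [hp1]
  have hB : (0:ℝ) ≤ if b ≤ x then p2 else 0 := by split <;> simp [hp2]
  simp only [tp, Measure.add_apply, Measure.smul_apply, smul_eq_mul,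
    Measure.dirac_apply' _ measurableSet_Iic, indicator_apply, mem_Iic, Pi.one_apply,
    mul_ite, mul_one, mul_zero]
  rw [hite, hite, hite, ← ENNReal.ofReal_add hA hB, ← ENNReal.ofReal_add (add_nonneg hA hB)
    (by split <;> simp [hp3] : (0:ℝ) ≤ if c ≤ x then 1 - p1 - p2 else 0)]

lemma tp_distFun (hp1 : 0 ≤ p1) (hp2 : 0 ≤ p2) (hp3 : 0 ≤ 1 - p1 - p2) (x : ℝ) :
    distFun (tp p1 p2 a b c) x =
      (if a ≤ x then p1 else 0) + (if b ≤ x then p2 else 0) +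
        (if c ≤ x then 1 - p1 - p2 else 0) := by
  rw [distFun, tp_Iic hp1 hp2 hp3, ENNReal.toReal_ofReal]
  split_ifs <;> simp_all <;> linarith

lemma tp_quantile_low (hp1 : 0 ≤ p1) (hp2 : 0 ≤ p2) (hp3 : 0 ≤ 1 - p1 - p2)
    (hab : a < b) (hbc : b < c) {u : ℝ} (hu0 : 0 < u) (hu : u ≤ p1) :
    lowerQuantile (tp p1 p2 a b c) u = a := by
  have hset : {x : ℝ | u ≤ distFun (tp p1 p2 a b c) x} = Ici a := by
    ext x
    rw [mem_setOf_eq, tp_distFun hp1 hp2 hp3, mem_Ici]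
    constructor
    · intro h
      by_contra hax
      push_neg at hax
      rw [if_neg (not_le.mpr hax), if_neg (not_le.mpr (hax.trans hab)),
        if_neg (not_le.mpr ((hax.trans hab).trans hbc))] at h
      linarith
    · intro hax
      rw [if_pos hax]
      split_ifs <;> linarith
  rw [lowerQuantile, hset, csInf_Ici]

lemma tp_quantile_mid (hp1 : 0 ≤ p1) (hp2 : 0 ≤ p2) (hp3 : 0 ≤ 1 - p1 - p2)
    (hab : a < b) (hbc : b < c) {u : ℝ} (hu0 : p1 < u) (hu : u ≤ p1 + p2) :
    lowerQuantile (tp p1 p2 a b c) u = b := by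
  have hset : {x : ℝ | u ≤ distFun (tp p1 p2 a b c) x} = Ici b := by
    ext x
    rw [mem_setOf_eq, tp_distFun hp1 hp2 hp3, mem_Ici]
    constructor
    · intro h
      by_contra hbx
      push_neg at hbx
      rw [if_neg (not_le.mpr hbx), if_neg (not_le.mpr (hbx.trans hbc))] at h
      split_ifs at h <;> linarith
    · intro hbx
      rw [if_pos ((hab.le).trans hbx), if_pos hbx]
      split_ifs <;> linarith
  rw [lowerQuantile, hset, csInf_Ici]

lemma tp_ES {α : ℝ} (hp1 : 0 < p1) (hp2 : 0 ≤ p2) (hp3 : 0 ≤ 1 - p1 - p2)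
    (hab : a < b) (hbc : b < c) (hα1 : p1 ≤ α) (hα2 : α ≤ p1 + p2) :
    ES (tp p1 p2 a b c) α = (p1 * (-a) + (α - p1) * (-b)) / α := by
  have h1 : ∀ u ∈ Ioc (0:ℝ) p1, VaR (tp p1 p2 a b c) u = -a := fun u hu => by
    rw [VaR, tp_quantile_low hp1.le hp2 hp3 hab hbc hu.1 hu.2]
  have h2 : ∀ u ∈ Ioc p1 α, VaR (tp p1 p2 a b c) u = -b := fun u hu => by
    rw [VaR, tp_quantile_mid hp1.le hp2 hp3 hab hbc hu.1 (hu.2.trans hα2)]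
  have e1 : ∫ u in Ioc (0:ℝ) p1, VaR (tp p1 p2 a b c) u = p1 * (-a) := by
    rw [setIntegral_congr_fun measurableSet_Ioc h1, setIntegral_const, Real.volume_real_Ioc_of_le hp1.le,
      sub_zero, smul_eq_mul]
  have e2 : ∫ u in Ioc p1 α, VaR (tp p1 p2 a b c) u = (α - p1) * (-b) := by
    rw [setIntegral_congr_fun measurableSet_Ioc h2, setIntegral_const, Real.volume_real_Ioc_of_le hα1,
      smul_eq_mul]
  have hi1 : IntegrableOn (VaR (tp p1 p2 a b c)) (Ioc 0 p1) volume := by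
    refine (integrableOn_const (by simp) :
      IntegrableOn (fun _ : ℝ => -a) (Ioc 0 p1) volume).congr_fun ?_ measurableSet_Ioc
    exact fun u hu => (h1 u hu).symm
  have hi2 : IntegrableOn (VaR (tp p1 p2 a b c)) (Ioc p1 α) volume := by
    refine (integrableOn_const (by simp) :
      IntegrableOn (fun _ : ℝ => -b) (Ioc p1 α) volume).congr_fun ?_ measurableSet_Ioc
    exact fun u hu => (h2 u hu).symm
  have hsplit : Ioc (0:ℝ) p1 ∪ Ioc p1 α = Ioc 0 α := Ioc_union_Ioc_eq_Ioc hp1.le hα1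
  have hd : Disjoint (Ioc (0:ℝ) p1) (Ioc p1 α) :=
    disjoint_left.mpr (fun u h1' h2' => absurd h1'.2 (not_le.mpr h2'.1))
  have : ∫ u in Ioc (0:ℝ) α, VaR (tp p1 p2 a b c) u = p1 * (-a) + (α - p1) * (-b) := by
    rw [← hsplit, setIntegral_union hd measurableSet_Ioc hi1 hi2, e1, e2]
  rw [ES, intervalIntegral.integral_of_le (lt_of_lt_of_le hp1 hα1).le, this]
  field_simp

end RMaux

namespace RMaux

variable {α : ℝ}

lemma sqrt_mul_helper (h0 : 0 < α) (h1 : α < 1) :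
    α * Real.sqrt ((1 - α) / α) = Real.sqrt (α * (1 - α)) := by
  have hne : α ≠ 0 := ne_of_gt h0
  rw [show α * (1 - α) = α ^ 2 * ((1 - α) / α) by field_simp,
    Real.sqrt_mul (sq_nonneg α), Real.sqrt_sq h0.le]

lemma sqrt_mul_helper' (h0 : 0 < α) (h1 : α < 1) :
    (1 - α) * Real.sqrt (α / (1 - α)) = Real.sqrt (α * (1 - α)) := by
  have hne : (1:ℝ) - α ≠ 0 := by linarith
  rw [show α * (1 - α) = (1 - α) ^ 2 * (α / (1 - α)) by field_simp,
    Real.sqrt_mul (sq_nonneg _), Real.sqrt_sq (by linarith)]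

lemma maxMeasure_mem (hα : α ∈ Ioo (0:ℝ) 1) :
    tp α 0 (-Real.sqrt ((1 - α) / α)) 0 (Real.sqrt (α / (1 - α))) ∈ stdMeasures := by
  obtain ⟨h0, h1⟩ := hα
  set K := Real.sqrt ((1 - α) / α) with hK
  set K' := Real.sqrt (α / (1 - α)) with hK'
  have hd1 : (0:ℝ) < (1 - α) / α := div_pos (by linarith) h0
  have hd2 : (0:ℝ) < α / (1 - α) := div_pos h0 (by linarith)
  have hK0 : 0 < K := Real.sqrt_pos.mpr hd1
  have hK'0 : 0 < K' := Real.sqrt_pos.mpr hd2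
  have hKsq : K ^ 2 = (1 - α) / α := Real.sq_sqrt hd1.le
  have hK'sq : K' ^ 2 = α / (1 - α) := Real.sq_sqrt hd2.le
  have hKsq' : α * K ^ 2 = 1 - α := by
    rw [hKsq]; field_simp
  have hK'sq' : (1 - α) * K' ^ 2 = α := by
    have hne : (1:ℝ) - α ≠ 0 := by linarith
    rw [hK'sq]; field_simp
  have hp3 : (0:ℝ) ≤ 1 - α - 0 := by linarith
  refine ⟨tp_prob h0.le le_rfl hp3, ?_, ?_⟩
  · rw [tp_integral h0.le le_rfl hp3 (fun x => x) measurable_id]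
    have e1 := sqrt_mul_helper h0 h1
    have e2 := sqrt_mul_helper' h0 h1
    linear_combination e2 - e1
  · rw [tp_integral h0.le le_rfl hp3 (fun x => x ^ 2) (measurable_id.pow_const 2)]
    linear_combination hKsq' + hK'sq'

lemma maxMeasure_ES (hα : α ∈ Ioo (0:ℝ) 1) :
    ES (tp α 0 (-Real.sqrt ((1 - α) / α)) 0 (Real.sqrt (α / (1 - α)))) α =
      Real.sqrt ((1 - α) / α) := by
  obtain ⟨h0, h1⟩ := hα
  have hK0 : 0 < Real.sqrt ((1 - α) / α) := Real.sqrt_pos.mpr (div_pos (by linarith) h0)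
  have hK'0 : 0 < Real.sqrt (α / (1 - α)) := Real.sqrt_pos.mpr (div_pos h0 (by linarith))
  rw [tp_ES h0 le_rfl (by linarith) (by linarith) hK'0 le_rfl (by linarith)]
  rw [show α * (- -Real.sqrt ((1 - α) / α)) + (α - α) * (-0) =
    Real.sqrt ((1 - α) / α) * α by ring, mul_div_assoc, div_self (ne_of_gt h0), mul_one]

lemma exists_small_ES (hα : α ∈ Ioo (0:ℝ) 1) {δ : ℝ} (hδ : 0 < δ) :
    ∃ μ ∈ stdMeasures, ES μ α < δ := by
  obtain ⟨h0, h1⟩ := hα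
  set m := min α (1 - α) with hm
  have hm0 : 0 < m := lt_min h0 (by linarith)
  set a : ℝ := max (1 / (α * δ)) (1 / Real.sqrt (2 * m)) with ha
  have ha0 : 0 < a := lt_max_of_lt_right (by positivity)
  set e : ℝ := 1 / (2 * a ^ 2) with he
  have he0 : 0 < e := by positivity
  have hae : a ≥ 1 / Real.sqrt (2 * m) := le_max_right _ _
  have hsm : Real.sqrt (2 * m) > 0 := Real.sqrt_pos.mpr (by linarith)
  have hside : e ≤ m := by
    have h1' : 1 / Real.sqrt (2 * m) * Real.sqrt (2 * m) = 1 := by field_simp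
    have h2' : a * Real.sqrt (2 * m) ≥ 1 := by
      calc a * Real.sqrt (2 * m) ≥ (1 / Real.sqrt (2 * m)) * Real.sqrt (2 * m) := by
            apply mul_le_mul_of_nonneg_right hae hsm.le
        _ = 1 := h1'
    have hsq : Real.sqrt (2 * m) ^ 2 = 2 * m := Real.sq_sqrt (by linarith)
    rw [he, div_le_iff₀ (by positivity)]
    nlinarith
  have heα : e ≤ α := le_trans hside (min_le_left _ _)
  have heα' : e ≤ 1 - α := le_trans hside (min_le_right _ _)
  have hp2 : (0:ℝ) ≤ 1 - 2 * e := by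
    rcases le_or_gt α (1 - α) with h | h
    · nlinarith
    · nlinarith
  have hp3 : (0:ℝ) ≤ 1 - e - (1 - 2 * e) := by linarith
  refine ⟨tp e (1 - 2 * e) (-a) 0 a, ⟨tp_prob he0.le hp2 hp3, ?_, ?_⟩, ?_⟩
  · rw [tp_integral he0.le hp2 hp3 (fun x => x) measurable_id]
    ring
  · rw [tp_integral he0.le hp2 hp3 (fun x => x ^ 2) (measurable_id.pow_const 2)]
    have ha' : a ≠ 0 := ne_of_gt ha0
    rw [he]
    field_simp
    ring
  · rw [tp_ES he0 hp2 hp3 (by linarith) ha0 heα (by linarith)]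
    have haδ : a ≥ 1 / (α * δ) := le_max_left _ _
    have key : (e * a) / α < δ := by
      have hea : e * a = 1 / (2 * a) := by rw [he]; field_simp
      have hsc : a * (α * δ) ≥ 1 / (α * δ) * (α * δ) :=
        mul_le_mul_of_nonneg_right haδ (by positivity)
      have hsc1 : 1 / (α * δ) * (α * δ) = 1 := by field_simp
      rw [hea, div_div, div_lt_iff₀ (by positivity)]
      nlinarith
    calc (e * (- - a) + (α - e) * (-0)) / α = (e * a) / α := by ring_nf
      _ < δ := key
end RMaux


/-- The relative measure of model risk for `ES_α` at `μ₀` over the class of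
standard probability measures:
`RM(μ₀) = (√((1-α)/α) − ES_α(μ₀)) / √((1-α)/α) = 1 − √(α/(1-α))·ES_α(μ₀)`. -/
theorem relative_measure_ES_std (α : ℝ) (hα : α ∈ Ioo (0 : ℝ) 1)
    (μ₀ : Measure ℝ) (hμ₀ : μ₀ ∈ stdMeasures) :
    (sSup ((fun μ : Measure ℝ => ES μ α) '' stdMeasures) - ES μ₀ α) /
        (sSup ((fun μ : Measure ℝ => ES μ α) '' stdMeasures) -
          sInf ((fun μ : Measure ℝ => ES μ α) '' stdMeasures)) =
      (Real.sqrt ((1 - α) / α) - ES μ₀ α) / Real.sqrt ((1 - α) / α) ∧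
    (sSup ((fun μ : Measure ℝ => ES μ α) '' stdMeasures) - ES μ₀ α) /
        (sSup ((fun μ : Measure ℝ => ES μ α) '' stdMeasures) -
          sInf ((fun μ : Measure ℝ => ES μ α) '' stdMeasures)) =
      1 - Real.sqrt (α / (1 - α)) * ES μ₀ α := by
  obtain ⟨h0, h1⟩ := hα
  set K := Real.sqrt ((1 - α) / α) with hKdef
  have hK0 : 0 < K := Real.sqrt_pos.mpr (div_pos (by linarith) h0)
  set Simg := (fun μ : Measure ℝ => ES μ α) '' stdMeasures with hS
  have hmemmax : K ∈ Simg := ⟨_, RMaux.maxMeasure_mem ⟨h0, h1⟩, RMaux.maxMeasure_ES ⟨h0, h1⟩⟩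
  have hub : ∀ y ∈ Simg, y ≤ K := by
    rintro y ⟨μ, hμ, rfl⟩
    haveI := hμ.1
    exact RMaux.ES_le_sqrt ⟨h0, h1⟩ hμ
  have hlb : ∀ y ∈ Simg, 0 ≤ y := by
    rintro y ⟨μ, hμ, rfl⟩
    haveI := hμ.1
    exact RMaux.ES_nonneg ⟨h0, h1⟩ hμ
  have hSup : sSup Simg = K :=
    le_antisymm (csSup_le ⟨K, hmemmax⟩ hub) (le_csSup ⟨K, hub⟩ hmemmax)
  have hInf : sInf Simg = 0 := by
    refine le_antisymm ?_ (le_csInf ⟨K, hmemmax⟩ hlb)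
    by_contra h
    push_neg at h
    obtain ⟨μ, hμ, hES⟩ := RMaux.exists_small_ES ⟨h0, h1⟩ h
    have := csInf_le ⟨0, hlb⟩ (⟨μ, hμ, rfl⟩ : ES μ α ∈ Simg)
    linarith
  have hKK : Real.sqrt (α / (1 - α)) * K = 1 := by
    have hne : (1:ℝ) - α ≠ 0 := by linarith
    have hne' : α ≠ 0 := ne_of_gt h0
    rw [hKdef, ← Real.sqrt_mul (le_of_lt (div_pos h0 (by linarith))),
      show α / (1 - α) * ((1 - α) / α) = 1 by field_simp, Real.sqrt_one]
  constructor
  · rw [hSup, hInf, sub_zero]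
  · rw [hSup, hInf, sub_zero, div_eq_iff (ne_of_gt hK0)]
    linear_combination ES μ₀ α * hKK
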